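/- For all m ≥ 1 and 0 ≤ k ≤ ⌊m/2⌋, the γ-coefficient α_{m,k} of a_m satisfies (−1)^k α_{m,k} > 0, and for 0 ≤ k ≤ ⌊(m−1)/2⌋ the γ-coefficient β_{m,k} of b_m satisfies (−1)^k β_{m,k} > 0. In other words, both a_m and b_m are alternatingly γ-positive. -/

import Mathlib

open Polynomial Finset

noncomputable def agpAB : ℕ → (ℕ → ℝ) × (ℕ → ℝ)
  | 0 => (fun k => if k = 0 then 1 else 0, fun _ => 0)
  | m + 1 =>
    ((fun k => match k with
      | 0 => (4*(m:ℝ)+2) * (agpAB m).1 0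
      | (k+1) => (4*(m:ℝ)-2*k) * (agpAB m).1 (k+1) - (4*(k:ℝ)+3) * (agpAB m).2 k),
     (fun k => (4*(k:ℝ)+1) * (agpAB m).1 k + (4*(m:ℝ)+2*(k:ℝ)+3) * (agpAB m).2 k))

noncomputable def agpA (m k : ℕ) : ℝ := (agpAB m).1 k
noncomputable def agpB (m k : ℕ) : ℝ := (agpAB m).2 k

lemma agpA_zero (k : ℕ) : agpA 0 k = if k = 0 then 1 else 0 := rfl
lemma agpB_zero (k : ℕ) : agpB 0 k = 0 := rfl
lemma agpA_succ_zero (m : ℕ) : agpA (m+1) 0 = (4*(m:ℝ)+2) * agpA m 0 := rfl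
lemma agpA_succ_succ (m k : ℕ) :
    agpA (m+1) (k+1) = (4*(m:ℝ)-2*k) * agpA m (k+1) - (4*(k:ℝ)+3) * agpB m k := rfl
lemma agpB_succ (m k : ℕ) :
    agpB (m+1) k = (4*(k:ℝ)+1) * agpA m k + (4*(m:ℝ)+2*(k:ℝ)+3) * agpB m k := rfl

lemma agp_guard : ∀ m, (∀ k, m < 2*k → agpA m k = 0) ∧ (∀ k, m ≤ 2*k → agpB m k = 0) := by
  intro m
  induction m with
  | zero =>
    constructor
    · intro k hk
      rw [agpA_zero, if_neg]; omega
    · intro k _; exact agpB_zero k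
  | succ m ih =>
    obtain ⟨ihA, ihB⟩ := ih
    constructor
    · intro k hk
      match k with
      | 0 => omega
      | k + 1 =>
        rw [agpA_succ_succ, ihA (k+1) (by omega), ihB k (by omega)]
        ring
    · intro k hk
      rw [agpB_succ, ihA k (by omega), ihB k (by omega)]
      ring

lemma agp_pos : ∀ m, (∀ k, 2*k ≤ m → 0 < (-1:ℝ)^k * agpA m k) ∧
    (∀ k, 2*k+1 ≤ m → 0 < (-1:ℝ)^k * agpB m k) := by
  intro m
  induction m with
  | zero =>
    refine ⟨fun k hk => ?_, fun k hk => by omega⟩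
    have : k = 0 := by omega
    subst this
    simp [agpA_zero]
  | succ m ih =>
    obtain ⟨ihA, ihB⟩ := ih
    constructor
    · intro k hk
      match k with
      | 0 =>
        rw [agpA_succ_zero]
        have := ihA 0 (by omega)
        simp only [pow_zero, one_mul] at this ⊢
        positivity
      | k + 1 =>
        rw [agpA_succ_succ]
        have hB := ihB k (by omega)
        have h2 : 0 < (4*(k:ℝ)+3) := by positivity
        have hBpos : 0 < (-1:ℝ)^(k+1) * (-((4*(k:ℝ)+3) * agpB m k)) := by
          rw [pow_succ]
          calc (0:ℝ) < ((-1)^k * agpB m k) * (4*(k:ℝ)+3) := by positivity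
          _ = (-1)^k * (-1) * -((4*(k:ℝ)+3) * agpB m k) := by ring
        rcases le_or_gt (2*(k+1)) m with hle | hgt
        · have hA := ihA (k+1) hle
          have h1 : 0 < (4*(m:ℝ)-2*k) := by
            have : (2*k+2 : ℝ) ≤ m := by exact_mod_cast hle
            nlinarith
          calc (0:ℝ) < (4*(m:ℝ)-2*k) * ((-1)^(k+1) * agpA m (k+1))
                + (-1:ℝ)^(k+1) * (-((4*(k:ℝ)+3) * agpB m k)) := by positivity
          _ = (-1)^(k+1) * ((4*(m:ℝ)-2*k) * agpA m (k+1) - (4*(k:ℝ)+3) * agpB m k) := by ring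
        · have hA0 : agpA m (k+1) = 0 := (agp_guard m).1 (k+1) (by omega)
          rw [hA0]
          calc (0:ℝ) < (-1:ℝ)^(k+1) * (-((4*(k:ℝ)+3) * agpB m k)) := hBpos
          _ = (-1)^(k+1) * ((4*(m:ℝ)-2*k) * 0 - (4*(k:ℝ)+3) * agpB m k) := by ring
    · intro k hk
      rw [agpB_succ]
      have hA := ihA k (by omega)
      have h1 : 0 < (4*(k:ℝ)+1) := by positivity
      rcases le_or_gt (2*k+1) m with hle | hgt
      · have hB := ihB k hle
        calc (0:ℝ) < (4*(k:ℝ)+1) * ((-1)^k * agpA m k)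
              + (4*(m:ℝ)+2*(k:ℝ)+3) * ((-1)^k * agpB m k) := by positivity
        _ = (-1)^k * ((4*(k:ℝ)+1) * agpA m k + (4*(m:ℝ)+2*(k:ℝ)+3) * agpB m k) := by ring
      · have hB0 : agpB m k = 0 := (agp_guard m).2 k (by omega)
        rw [hB0]
        calc (0:ℝ) < (4*(k:ℝ)+1) * ((-1)^k * agpA m k) := by positivity
        _ = (-1)^k * ((4*(k:ℝ)+1) * agpA m k + (4*(m:ℝ)+2*(k:ℝ)+3) * 0) := by ring

noncomputable def agpSa (m : ℕ) : Polynomial ℝ :=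
  ∑ k ∈ Finset.range (m+1), C (agpA m k) * X^k * (1+X)^(m - 2*k)

noncomputable def agpSb (m : ℕ) : Polynomial ℝ :=
  ∑ k ∈ Finset.range (m+1), C (agpB m k) * X^k * (1+X)^(m - 1 - 2*k)

lemma agp_reflect_sum {ι : Type*} (s : Finset ι) (f : ι → Polynomial ℝ) (N : ℕ) :
    reflect N (∑ i ∈ s, f i) = ∑ i ∈ s, reflect N (f i) := by
  classical
  induction s using Finset.induction_on with
  | empty => simp [reflect_zero]
  | insert _ _ h ih => simp [Finset.sum_insert h, reflect_add, ih]

lemma agp_reflect_one_add_pow (e : ℕ) : reflect e ((1+X : Polynomial ℝ)^e) = (1+X)^e := by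
  induction e with
  | zero => simp
  | succ e ih =>
    have h1 : ((1+X : Polynomial ℝ)^(e+1)) = (1+X)^e * (1+X) := by ring
    have hd1 : (1+X : Polynomial ℝ).natDegree ≤ 1 := by
      rw [add_comm]; exact (natDegree_X_add_C (1:ℝ)).le
    have hde : ((1+X : Polynomial ℝ)^e).natDegree ≤ e := by
      refine natDegree_pow_le.trans ?_
      calc e * (1+X : Polynomial ℝ).natDegree ≤ e * 1 := Nat.mul_le_mul le_rfl hd1
      _ = e := by omega
    rw [h1, reflect_mul _ _ hde hd1, ih]
    congr 1
    rw [reflect_add, reflect_one, reflect_one_X]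
    ring

lemma agp_natDegree_term (c : ℝ) (k e : ℕ) :
    (C c * X^k * (1+X)^e : Polynomial ℝ).natDegree ≤ k + e := by
  have hd1 : (1+X : Polynomial ℝ).natDegree ≤ 1 := by
    rw [add_comm]; exact (natDegree_X_add_C (1:ℝ)).le
  have hde : ((1+X : Polynomial ℝ)^e).natDegree ≤ e := by
    refine natDegree_pow_le.trans ?_
    calc e * (1+X : Polynomial ℝ).natDegree ≤ e * 1 := Nat.mul_le_mul le_rfl hd1
    _ = e := by omega
  calc (C c * X^k * (1+X)^e : Polynomial ℝ).natDegree
      ≤ (C c * X^k : Polynomial ℝ).natDegree + ((1+X : Polynomial ℝ)^e).natDegree :=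
        natDegree_mul_le
  _ ≤ k + e := by
      refine add_le_add ?_ hde
      refine natDegree_mul_le.trans ?_
      simp [natDegree_C, natDegree_X_pow]

lemma agp_reflect_term (c : ℝ) (k e : ℕ) :
    reflect (2*k + e) (C c * X^k * (1+X)^e : Polynomial ℝ) = C c * X^k * (1+X)^e := by
  have hd1 : (1+X : Polynomial ℝ).natDegree ≤ 1 := by
    rw [add_comm]; exact (natDegree_X_add_C (1:ℝ)).le
  have hde : ((1+X : Polynomial ℝ)^e).natDegree ≤ e := by
    refine natDegree_pow_le.trans ?_
    calc e * (1+X : Polynomial ℝ).natDegree ≤ e * 1 := Nat.mul_le_mul le_rfl hd1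
    _ = e := by omega
  rw [mul_assoc, reflect_C_mul]
  congr 1
  rw [reflect_mul _ _ (by simp [natDegree_X_pow]; omega : (X^k : Polynomial ℝ).natDegree ≤ 2*k) hde,
    reflect_monomial, agp_reflect_one_add_pow]
  congr 2
  rw [revAt_le (by omega)]
  omega

lemma agp_reflect_Sa (m : ℕ) : reflect m (agpSa m) = agpSa m := by
  rw [agpSa, agp_reflect_sum]
  refine Finset.sum_congr rfl fun k hk => ?_
  rcases le_or_gt (2*k) m with hle | hgt
  · set c := agpA m k with hc
    obtain ⟨e, rfl⟩ : ∃ e, m = 2*k + e := ⟨m - 2*k, by omega⟩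
    rw [show 2*k + e - 2*k = e from by omega]
    exact agp_reflect_term _ _ _
  · rw [(agp_guard m).1 k hgt]
    simp

lemma agp_reflect_Sb (m : ℕ) : reflect m (agpSb (m+1)) = agpSb (m+1) := by
  rw [agpSb, agp_reflect_sum]
  refine Finset.sum_congr rfl fun k hk => ?_
  rcases le_or_gt (2*k) m with hle | hgt
  · set c := agpB (m+1) k with hc
    obtain ⟨e, rfl⟩ : ∃ e, m = 2*k + e := ⟨m - 2*k, by omega⟩
    rw [show 2*k + e + 1 - 1 - 2*k = e from by omega]
    exact agp_reflect_term _ _ _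
  · rw [(agp_guard (m+1)).2 k (by omega)]
    simp

lemma agp_natDegree_Sb (m : ℕ) : (agpSb (m+1)).natDegree ≤ m := by
  rw [agpSb]
  refine natDegree_sum_le_of_forall_le _ _ fun k hk => ?_
  rcases le_or_gt (2*k) m with hle | hgt
  · exact (agp_natDegree_term _ _ _).trans (by omega)
  · rw [(agp_guard (m+1)).2 k (by omega)]
    simp

lemma agp_natDegree_Sa (m : ℕ) : (agpSa m).natDegree ≤ m := by
  rw [agpSa]
  refine natDegree_sum_le_of_forall_le _ _ fun k hk => ?_
  rcases le_or_gt (2*k) m with hle | hgt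
  · exact (agp_natDegree_term _ _ _).trans (by omega)
  · rw [(agp_guard m).1 k hgt]
    simp

lemma agp_indep (n : ℕ) (c : ℕ → ℝ) (f : ℕ → ℕ)
    (h : ∑ k ∈ Finset.range n, C (c k) * X^k * (1+X)^(f k) = 0) :
    ∀ k, k < n → c k = 0 := by
  intro k
  induction k using Nat.strong_induction_on with
  | _ k ih =>
    intro hk
    have hc : ((∑ j ∈ Finset.range n, C (c j) * X^j * (1+X)^(f j) : Polynomial ℝ)).coeff k = 0 := by
      rw [h]; simp
    rw [finset_sum_coeff] at hc
    have hterm : ∀ j ∈ Finset.range n, j ≠ k →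
        (C (c j) * X^j * (1+X)^(f j) : Polynomial ℝ).coeff k = 0 := by
      intro j hj hjk
      rw [show (C (c j) * X^j * (1+X)^(f j) : Polynomial ℝ)
          = (C (c j) * (1+X)^(f j)) * X^j from by ring, coeff_mul_X_pow']
      rcases lt_or_ge k j with hlt | hle
      · rw [if_neg (by omega)]
      · rw [if_pos (by omega), coeff_C_mul, ih j (by omega) (by omega), zero_mul]
    rw [Finset.sum_eq_single_of_mem k (Finset.mem_range.mpr hk) hterm] at hc
    rw [show (C (c k) * X^k * (1+X)^(f k) : Polynomial ℝ)
        = (C (c k) * (1+X)^(f k)) * X^k from by ring, coeff_mul_X_pow',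
      if_pos le_rfl, coeff_C_mul] at hc
    simpa [coeff_one_add_X_pow] using hc

lemma agp_key1 (k e : ℕ) (c : ℝ) :
    (2*((2*k+e : ℕ) : Polynomial ℝ)+1)*(2+3*X)*(C c * X^k*(1+X)^e)
      - 2*X*(1+X)*derivative (C c * X^k*(1+X)^e)
    = C ((4*((2*k+e:ℕ):ℝ)+2-2*(k:ℝ))*c) * X^k*(1+X)^(e+1)
      + X*(C ((4*(k:ℝ)+1)*c) * X^k*(1+X)^e) := by
  simp only [derivative_mul, derivative_C, derivative_X_pow, derivative_pow, derivative_add,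
    derivative_one, derivative_X, zero_add, add_zero, mul_one, zero_mul, mul_zero]
  push_cast
  match k, e with
  | 0, 0 => simp [map_ofNat]; ring
  | 0, e+1 => simp [pow_succ, map_ofNat]; ring
  | k+1, 0 => simp [pow_succ, map_ofNat]; ring
  | k+1, e+1 => simp [pow_succ, map_ofNat]; ring

lemma agp_key2 (k e : ℕ) (c : ℝ) :
    (2*((2*k+1+e : ℕ) : Polynomial ℝ)+1)*(2+3*X)*(C c * X^(k+1)*(1+X)^e)
      - 2*X*(1+X)*derivative (C c * X^(k+1)*(1+X)^e)
    = X*(C ((4*((2*k+1+e:ℕ):ℝ)+2*(k:ℝ)+3)*c) * X^k*(1+X)^(e+1))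
      - C ((4*(k:ℝ)+3)*c) * X^(k+1)*(1+X)^e := by
  simp only [derivative_mul, derivative_C, derivative_X_pow, derivative_pow, derivative_add,
    derivative_one, derivative_X, zero_add, add_zero, mul_one, zero_mul, mul_zero]
  push_cast
  match e with
  | 0 => simp [pow_succ, map_ofNat]; ring
  | e+1 => simp [pow_succ, map_ofNat]; ring

lemma agp_bigId (m : ℕ) :
    (2*(m : Polynomial ℝ)+1)*(2+3*X)*(agpSa m + X * agpSb m)
      - 2*X*(1+X)*derivative (agpSa m + X * agpSb m)
    = agpSa (m+1) + X * agpSb (m+1) := by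
  have claimA : (2*(m : Polynomial ℝ)+1)*(2+3*X)*(agpSa m) - 2*X*(1+X)*derivative (agpSa m)
      = ∑ k ∈ Finset.range (m+1),
          (C ((4*(m:ℝ)+2-2*(k:ℝ)) * agpA m k) * X^k * (1+X)^(m+1-2*k)
            + X * (C ((4*(k:ℝ)+1) * agpA m k) * X^k * (1+X)^(m-2*k))) := by
    rw [agpSa, derivative_sum, Finset.mul_sum, Finset.mul_sum, ← Finset.sum_sub_distrib]
    refine Finset.sum_congr rfl fun k hk => ?_
    rcases le_or_gt (2*k) m with hle | hgt
    · set c := agpA m k with hc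
      obtain ⟨e, rfl⟩ : ∃ e, m = 2*k + e := ⟨m - 2*k, by omega⟩
      rw [show 2*k+e - 2*k = e from by omega, show 2*k+e+1 - 2*k = e+1 from by omega]
      exact agp_key1 k e c
    · rw [(agp_guard m).1 k hgt]
      simp
  have hXSb : X * agpSb m = ∑ k ∈ Finset.range (m+1),
      C (agpB m k) * X^(k+1) * (1+X)^(m-1-2*k) := by
    rw [agpSb, Finset.mul_sum]
    refine Finset.sum_congr rfl fun k hk => ?_
    ring
  have claimB : (2*(m : Polynomial ℝ)+1)*(2+3*X)*(X * agpSb m)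
        - 2*X*(1+X)*derivative (X * agpSb m)
      = ∑ k ∈ Finset.range (m+1),
          (X * (C ((4*(m:ℝ)+2*(k:ℝ)+3) * agpB m k) * X^k * (1+X)^(m-2*k))
            - C ((4*(k:ℝ)+3) * agpB m k) * X^(k+1) * (1+X)^(m-1-2*k)) := by
    rw [hXSb, derivative_sum, Finset.mul_sum, Finset.mul_sum, ← Finset.sum_sub_distrib]
    refine Finset.sum_congr rfl fun k hk => ?_
    rcases le_or_gt (2*k+1) m with hle | hgt
    · set c := agpB m k with hc
      obtain ⟨e, rfl⟩ : ∃ e, m = 2*k+1+e := ⟨m - (2*k+1), by omega⟩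
      rw [show 2*k+1+e - 1 - 2*k = e from by omega, show 2*k+1+e - 2*k = e+1 from by omega]
      exact agp_key2 k e c
    · rw [(agp_guard m).2 k (by omega)]
      simp
  have lhs_eq : (2*(m : Polynomial ℝ)+1)*(2+3*X)*(agpSa m + X * agpSb m)
      - 2*X*(1+X)*derivative (agpSa m + X * agpSb m)
      = ((2*(m : Polynomial ℝ)+1)*(2+3*X)*(agpSa m) - 2*X*(1+X)*derivative (agpSa m))
        + ((2*(m : Polynomial ℝ)+1)*(2+3*X)*(X * agpSb m)
            - 2*X*(1+X)*derivative (X * agpSb m)) := by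
    rw [derivative_add]; ring
  rw [lhs_eq, claimA, claimB, ← Finset.sum_add_distrib]
  -- now goal: big single sum = agpSa (m+1) + X * agpSb (m+1)
  have claimSb : agpSb (m+1)
      = ∑ k ∈ Finset.range (m+1),
          C ((4*(k:ℝ)+1) * agpA m k + (4*(m:ℝ)+2*(k:ℝ)+3) * agpB m k)
            * X^k * (1+X)^(m-2*k) := by
    rw [agpSb, Finset.sum_range_succ, (agp_guard (m+1)).2 (m+1) (by omega)]
    simp only [map_zero, zero_mul, add_zero]
    refine Finset.sum_congr rfl fun k hk => ?_
    rw [show m+1-1-2*k = m-2*k from by omega, agpB_succ]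
  have claimSa : agpSa (m+1)
      = (∑ k ∈ Finset.range (m+1),
          C ((4*(m:ℝ)+2-2*(k:ℝ)) * agpA m k) * X^k * (1+X)^(m+1-2*k))
        - ∑ k ∈ Finset.range (m+1),
            C ((4*(k:ℝ)+3) * agpB m k) * X^(k+1) * (1+X)^(m-1-2*k) := by
    rw [agpSa, Finset.sum_range_succ']
    have hlast : ∀ k ∈ Finset.range (m+1),
        C (agpA (m+1) (k+1)) * X^(k+1) * (1+X)^(m+1-2*(k+1))
        = C ((4*(m:ℝ)+2-2*(((k+1):ℕ):ℝ)) * agpA m (k+1)) * X^(k+1) * (1+X)^(m+1-2*(k+1))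
          - C ((4*(k:ℝ)+3) * agpB m k) * X^(k+1) * (1+X)^(m-1-2*k) := by
      intro k hk
      rw [show m+1-2*(k+1) = m-1-2*k from by omega, agpA_succ_succ,
        show (4*(m:ℝ)-2*(k:ℝ)) * agpA m (k+1) - (4*(k:ℝ)+3) * agpB m k
          = (4*(m:ℝ)+2-2*(((k+1):ℕ):ℝ)) * agpA m (k+1) - (4*(k:ℝ)+3) * agpB m k from by
            push_cast; ring,
        map_sub, sub_mul, sub_mul]
    rw [Finset.sum_congr rfl hlast, Finset.sum_sub_distrib]
    have hshiftSA : ∑ k ∈ Finset.range (m+1),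
        C ((4*(m:ℝ)+2-2*(k:ℝ)) * agpA m k) * X^k * (1+X)^(m+1-2*k)
        = (∑ k ∈ Finset.range (m+1),
            C ((4*(m:ℝ)+2-2*(((k+1):ℕ):ℝ)) * agpA m (k+1)) * X^(k+1) * (1+X)^(m+1-2*(k+1)))
          + C ((4*(m:ℝ)+2-2*((0:ℕ):ℝ)) * agpA m 0) * X^0 * (1+X)^(m+1-2*0) := by
      rw [Finset.sum_range_succ'
        (fun k => C ((4*(m:ℝ)+2-2*((k:ℕ):ℝ)) * agpA m k) * X^k * (1+X)^(m+1-2*k)) m]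
      rw [Finset.sum_range_succ
        (fun k => C ((4*(m:ℝ)+2-2*(((k+1):ℕ):ℝ)) * agpA m (k+1)) * X^(k+1) * (1+X)^(m+1-2*(k+1))) m]
      rw [(agp_guard m).1 (m+1) (by omega)]
      simp
    rw [hshiftSA]
    have h0 : C (agpA (m+1) 0) * X^0 * (1+X)^(m+1-2*0)
        = C ((4*(m:ℝ)+2-2*((0:ℕ):ℝ)) * agpA m 0) * X^0 * (1+X)^(m+1-2*0) := by
      rw [agpA_succ_zero]
      norm_num
    rw [h0]
    ring
  rw [claimSa, claimSb, Finset.mul_sum, ← Finset.sum_sub_distrib, ← Finset.sum_add_distrib]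
  refine Finset.sum_congr rfl fun k hk => ?_
  rw [map_add, add_mul]
  ring

lemma agp_reflect_X_Sb (m : ℕ) : reflect (m+1) (X * agpSb (m+1)) = agpSb (m+1) := by
  have h := reflect_mul (X : Polynomial ℝ) (agpSb (m+1)) (F := 1) (G := m)
    (by simp) (agp_natDegree_Sb m)
  rw [show 1+m = m+1 from by omega] at h
  rw [h, reflect_one_X, one_mul, agp_reflect_Sb]

theorem alternating_gamma_positivity (Q a b : ℕ → Polynomial ℝ) (α β : ℕ → ℕ → ℝ)
    (h0 : Q 0 = 1)
    (hrec : ∀ m : ℕ, Q (m + 1) =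
      (2 * (m : Polynomial ℝ) + 1) * (2 + 3 * Polynomial.X) * Q m
        - 2 * Polynomial.X * (1 + Polynomial.X) * Polynomial.derivative (Q m))
    (ha : ∀ m : ℕ, (1 - Polynomial.X) * a m = Q m - Polynomial.X * Polynomial.reflect m (Q m))
    (hb : ∀ m : ℕ, (Polynomial.X - 1) * b m = Q m - Polynomial.reflect m (Q m))
    (haexp : ∀ m : ℕ, a m = ∑ k ∈ Finset.range (m / 2 + 1),
      Polynomial.C (α m k) * Polynomial.X ^ k * (1 + Polynomial.X) ^ (m - 2 * k))
    (hbexp : ∀ m : ℕ, b m = ∑ k ∈ Finset.range ((m - 1) / 2 + 1),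
      Polynomial.C (β m k) * Polynomial.X ^ k * (1 + Polynomial.X) ^ (m - 1 - 2 * k)) :
    ∀ m : ℕ, 1 ≤ m →
      (∀ k ≤ m / 2, 0 < (-1 : ℝ) ^ k * α m k) ∧
      (∀ k ≤ (m - 1) / 2, 0 < (-1 : ℝ) ^ k * β m k) := by
  have h1mX : (1 - X : Polynomial ℝ) ≠ 0 := fun h => by
    have := congrArg (fun p => Polynomial.coeff p 1) h
    simp [coeff_one] at this
  have hXm1 : (X - 1 : Polynomial ℝ) ≠ 0 := fun h => by
    have := congrArg (fun p => Polynomial.coeff p 1) h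
    simp [coeff_one] at this
  have hdecomp : ∀ m, Q m = a m + X * b m := by
    intro m
    have key : (1 - X) * (a m + X * b m) = (1 - X) * Q m := by
      have h3 : (1 - X : Polynomial ℝ) * (X * b m) = -(X * ((X - 1) * b m)) := by ring
      calc (1-X) * (a m + X * b m) = (1-X) * a m + (1-X)*(X * b m) := by ring
        _ = (Q m - X * reflect m (Q m)) + -(X * ((X-1) * b m)) := by rw [ha m, h3]
        _ = (Q m - X * reflect m (Q m)) + -(X * (Q m - reflect m (Q m))) := by rw [hb m]
        _ = (1 - X) * Q m := by ring
    exact (mul_left_cancel₀ h1mX key).symm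
  have hSa0 : agpSa 0 = 1 := by simp [agpSa, agpA_zero]
  have hSb0 : agpSb 0 = 0 := by simp [agpSb, agpB_zero]
  have hexp : ∀ m, a m = agpSa m ∧ b m = agpSb m := by
    intro m
    induction m with
    | zero =>
      have hQ0 : reflect 0 (1 : Polynomial ℝ) = 1 := by simp
      constructor
      · have h1 := ha 0
        rw [h0, hQ0] at h1
        refine mul_left_cancel₀ h1mX (h1.trans ?_)
        rw [hSa0]; ring
      · have h2 := hb 0
        rw [h0, hQ0] at h2
        refine mul_left_cancel₀ hXm1 (h2.trans ?_)
        rw [hSb0]; ring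
    | succ m ih =>
      obtain ⟨iha, ihb⟩ := ih
      have hQm1 : Q (m+1) = agpSa (m+1) + X * agpSb (m+1) := by
        rw [hrec m, hdecomp m, iha, ihb, agp_bigId m]
      have hrefl : reflect (m+1) (Q (m+1)) = agpSa (m+1) + agpSb (m+1) := by
        rw [hQm1, reflect_add, agp_reflect_Sa, agp_reflect_X_Sb]
      constructor
      · have h1 := ha (m+1)
        rw [hrefl, hQm1] at h1
        refine mul_left_cancel₀ h1mX (h1.trans ?_)
        ring
      · have h2 := hb (m+1)
        rw [hrefl, hQm1] at h2
        refine mul_left_cancel₀ hXm1 (h2.trans ?_)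
        ring
  intro m hm
  have hA : ∀ k, k ≤ m/2 → α m k = agpA m k := by
    have e2 : agpSa m = ∑ k ∈ Finset.range (m/2+1), C (agpA m k) * X^k * (1+X)^(m-2*k) := by
      rw [agpSa]
      refine (Finset.sum_subset (Finset.range_subset_range.mpr (by omega)) fun k hk hk2 => ?_).symm
      rw [Finset.mem_range, not_lt] at hk2
      rw [(agp_guard m).1 k (by omega)]
      simp
    have hsum : ∑ k ∈ Finset.range (m/2+1),
        C (α m k - agpA m k) * X^k * (1+X)^(m-2*k) = 0 := by
      have : ∀ k ∈ Finset.range (m/2+1), C (α m k - agpA m k) * X^k * (1+X)^(m-2*k)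
          = C (α m k) * X^k * (1+X)^(m-2*k) - C (agpA m k) * X^k * (1+X)^(m-2*k) := by
        intro k hk
        rw [map_sub, sub_mul, sub_mul]
      rw [Finset.sum_congr rfl this, Finset.sum_sub_distrib, ← haexp m, ← e2, (hexp m).1,
        sub_self]
    intro k hk
    have := agp_indep (m/2+1) (fun k => α m k - agpA m k) (fun k => m - 2*k) hsum k (by omega)
    linarith [show α m k - agpA m k = 0 from this]
  have hB : ∀ k, k ≤ (m-1)/2 → β m k = agpB m k := by
    have e2 : agpSb m = ∑ k ∈ Finset.range ((m-1)/2+1),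
        C (agpB m k) * X^k * (1+X)^(m-1-2*k) := by
      rw [agpSb]
      refine (Finset.sum_subset (Finset.range_subset_range.mpr (by omega)) fun k hk hk2 => ?_).symm
      rw [Finset.mem_range, not_lt] at hk2
      rw [(agp_guard m).2 k (by omega)]
      simp
    have hsum : ∑ k ∈ Finset.range ((m-1)/2+1),
        C (β m k - agpB m k) * X^k * (1+X)^(m-1-2*k) = 0 := by
      have : ∀ k ∈ Finset.range ((m-1)/2+1), C (β m k - agpB m k) * X^k * (1+X)^(m-1-2*k)
          = C (β m k) * X^k * (1+X)^(m-1-2*k) - C (agpB m k) * X^k * (1+X)^(m-1-2*k) := by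
        intro k hk
        rw [map_sub, sub_mul, sub_mul]
      rw [Finset.sum_congr rfl this, Finset.sum_sub_distrib, ← hbexp m, ← e2, (hexp m).2,
        sub_self]
    intro k hk
    have := agp_indep ((m-1)/2+1) (fun k => β m k - agpB m k) (fun k => m - 1 - 2*k) hsum k
      (by omega)
    linarith [show β m k - agpB m k = 0 from this]
  constructor
  · intro k hk
    rw [hA k hk]
    exact (agp_pos m).1 k (by omega)
  · intro k hk
    rw [hB k hk]
    exact (agp_pos m).2 k (by omega)
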